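/- arXiv:0910.5563 — 5 statements merged into one kernel-verified Lean document; each statement's English description precedes it below -/
import Mathlib

section
/- Mehler's formula: for real (or complex) x, y and complex s with |s| < 1, Σ_{n≥0} (s/2)^n / n! · H_n(x)·H_n(y) = (1−s²)^{−1/2} · exp((2xys − (x²+y²)s²)/(1−s²)). -/
open scoped Nat

/-- Physicists' Hermite polynomial `H_n(x) = (−1)^n e^{x²} (d/dx)^n e^{−x²}`,
extended to a complex argument. -/
noncomputable def Hphys (n : ℕ) (x : ℂ) : ℂ :=
  (-1 : ℂ) ^ n * Complex.exp (x ^ 2) *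
    iteratedDeriv n (fun y : ℂ => Complex.exp (-y ^ 2)) x

open Complex MeasureTheory Real Set
lemma hiter_gen (x : ℂ) (n : ℕ) :
    iteratedDeriv n (fun w : ℂ => Complex.exp (-(x - w) ^ 2)) 0
      = (-1 : ℂ) ^ n * iteratedDeriv n (fun z : ℂ => Complex.exp (-z ^ 2)) x := by
  have h2 := congrFun (iteratedDeriv_comp_const_add n (fun z : ℂ => Complex.exp (-z ^ 2)) x) 0
  have h1 := iteratedDeriv_comp_neg n (fun u : ℂ => Complex.exp (-(x + u) ^ 2)) 0
  have e1 : (fun w : ℂ => Complex.exp (-(x - w) ^ 2))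
      = (fun w : ℂ => Complex.exp (-(x + -w) ^ 2)) := by ext w; ring_nf
  have e2 : (fun u : ℂ => Complex.exp (-(x + u) ^ 2))
      = (fun z : ℂ => Complex.exp (-z ^ 2)) ∘ (fun u : ℂ => x + u) := rfl
  rw [e1]
  calc iteratedDeriv n (fun w : ℂ => Complex.exp (-(x + -w) ^ 2)) 0
      = (-1 : ℂ) ^ n • iteratedDeriv n (fun u : ℂ => Complex.exp (-(x + u) ^ 2)) (-0) := h1
    _ = (-1 : ℂ) ^ n * iteratedDeriv n (fun z : ℂ => Complex.exp (-z ^ 2)) x := by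
        rw [neg_zero, smul_eq_mul]
        congr 1
        simpa using h2

lemma hasSum_gen (x t : ℂ) :
    HasSum (fun n : ℕ => Hphys n x * t ^ n / (n ! : ℂ))
      (Complex.exp (2 * x * t - t ^ 2)) := by
  have hg : Differentiable ℂ (fun w : ℂ => Complex.exp (-(x - w) ^ 2)) := by fun_prop
  have H := (Complex.hasSum_taylorSeries_of_entire hg 0 t).mul_left (Complex.exp (x ^ 2))
  have hfun : (fun n : ℕ => Hphys n x * t ^ n / (n ! : ℂ))
      = fun n : ℕ => Complex.exp (x ^ 2) *
          ((n ! : ℂ)⁻¹ • (t - 0) ^ n • iteratedDeriv n (fun w : ℂ => Complex.exp (-(x - w) ^ 2)) 0) := by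
    ext n
    rw [hiter_gen x n, Hphys]
    simp only [smul_eq_mul, sub_zero]
    ring
  have hval : Complex.exp (2 * x * t - t ^ 2)
      = Complex.exp (x ^ 2) * Complex.exp (-(x - t) ^ 2) := by
    rw [← Complex.exp_add]; ring_nf
  rw [hfun, hval]
  exact H
-- integrability of |v|^n * exp (-a v^2)
lemma integrable_abs_pow_gauss {a : ℝ} (ha : 0 < a) (n : ℕ) :
    Integrable (fun v : ℝ => |v| ^ n * Real.exp (-a * v ^ 2)) := by
  have h := integrable_rpow_mul_exp_neg_mul_sq ha (s := (n : ℝ)) (by exact_mod_cast neg_one_lt_zero.trans_le (Nat.cast_nonneg n))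
  have h2 : Integrable (fun v : ℝ => v ^ n * Real.exp (-a * v ^ 2)) := by
    simpa [Real.rpow_natCast] using h
  simpa [abs_mul, _root_.abs_pow, _root_.abs_of_nonneg (Real.exp_nonneg _)] using h2.abs

-- integrability of |v|^n * exp (c v - v^2)
lemma integrable_abs_pow_exp_lin (c : ℝ) (n : ℕ) :
    Integrable (fun v : ℝ => |v| ^ n * Real.exp (c * v - v ^ 2)) := by
  refine ((integrable_abs_pow_gauss (by norm_num : (0:ℝ) < 1/2) n).const_mul
    (Real.exp (c ^ 2 / 2))).mono' ?_ ?_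
  · exact (Continuous.mul (by continuity) (by continuity)).aestronglyMeasurable
  · filter_upwards with v
    rw [norm_of_nonneg (by positivity)]
    rw [mul_comm (Real.exp (c ^ 2 / 2)), mul_assoc, ← Real.exp_add]
    gcongr
    nlinarith [sq_nonneg (v - c), sq_nonneg v]

-- moment value
lemma integral_abs_pow_gauss {a : ℝ} (ha : 0 < a) (n : ℕ) :
    ∫ v : ℝ, |v| ^ n * Real.exp (-a * v ^ 2)
      = a ^ (-(n + 1 : ℝ) / 2) * Real.Gamma ((n + 1) / 2) := by
  have : (fun v : ℝ => |v| ^ n * Real.exp (-a * v ^ 2))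
      = fun v : ℝ => (fun w : ℝ => w ^ n * Real.exp (-a * w ^ 2)) |v| := by
    ext v; simp [sq_abs]
  rw [this, integral_comp_abs (f := fun w : ℝ => w ^ n * Real.exp (-a * w ^ 2))]
  have h := _root_.integral_rpow_mul_exp_neg_mul_rpow (p := 2) (q := (n : ℝ)) (b := a)
    (by norm_num) (by exact_mod_cast neg_one_lt_zero.trans_le (Nat.cast_nonneg n)) ha
  have e : ∀ v ∈ Ioi (0:ℝ), v ^ (n : ℝ) * Real.exp (-a * v ^ (2:ℝ))
      = v ^ n * Real.exp (-a * v ^ 2) := by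
    intro v hv
    rw [Real.rpow_natCast, ← Real.rpow_natCast v 2]
    norm_num
  rw [setIntegral_congr_fun measurableSet_Ioi e] at h
  rw [h]
  ring

-- log-convexity: Γ(m)² ≤ Γ(m - 1/2) Γ(m + 1/2) for m - 1/2 > 0
lemma gamma_sq_le_mul {m : ℝ} (hm : 1 / 2 < m) :
    Real.Gamma m ^ 2 ≤ Real.Gamma (m - 1 / 2) * Real.Gamma (m + 1 / 2) := by
  have h1 : (0:ℝ) < m - 1/2 := by linarith
  have h2 : (0:ℝ) < m + 1/2 := by linarith
  have hc := Real.convexOn_log_Gamma.2 (mem_Ioi.mpr h1) (mem_Ioi.mpr h2)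
    (by norm_num : (0:ℝ) ≤ 1/2) (by norm_num : (0:ℝ) ≤ 1/2) (by norm_num)
  simp only [Function.comp_apply, smul_eq_mul] at hc
  rw [show (1/2:ℝ) * (m - 1/2) + 1/2 * (m + 1/2) = m by ring] at hc
  have hGm : 0 < Real.Gamma m := Real.Gamma_pos_of_pos (by linarith)
  have hG1 : 0 < Real.Gamma (m - 1/2) := Real.Gamma_pos_of_pos h1
  have hG2 : 0 < Real.Gamma (m + 1/2) := Real.Gamma_pos_of_pos h2
  have h3 := Real.exp_le_exp.mpr (mul_le_mul_of_nonneg_left hc (by norm_num : (0:ℝ) ≤ 2))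
  rw [show (2:ℝ) * Real.log (Real.Gamma m) = Real.log (Real.Gamma m ^ 2) by
      rw [Real.log_pow]; push_cast; ring] at h3
  rw [show (2:ℝ) * (1/2 * Real.log (Real.Gamma (m - 1/2)) + 1/2 * Real.log (Real.Gamma (m + 1/2)))
      = Real.log (Real.Gamma (m - 1/2) * Real.Gamma (m + 1/2)) by
      rw [Real.log_mul hG1.ne' hG2.ne']; ring] at h3
  rwa [Real.exp_log (by positivity), Real.exp_log (by positivity)] at h3

lemma gamma_half_le (n : ℕ) :
    Real.Gamma ((n + 1) / 2) ≤ 2 * Real.Gamma ((n + 2) / 2) := by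
  rcases Nat.eq_zero_or_pos n with hn | hn
  · subst hn
    simp only [Nat.cast_zero]
    rw [show ((0:ℝ)+1)/2 = 1/2 by norm_num, show ((0:ℝ)+2)/2 = 1 by norm_num,
      Real.Gamma_one_half_eq, Real.Gamma_one, mul_one]
    have h4 : √(4:ℝ) = 2 := by
      rw [show (4:ℝ) = 2^2 by norm_num, Real.sqrt_sq (by norm_num : (0:ℝ) ≤ 2)]
    calc √π ≤ √4 := Real.sqrt_le_sqrt (by nlinarith [Real.pi_le_four])
      _ = 2 := h4
  · have hn1 : (1:ℝ) ≤ (n:ℝ) := by exact_mod_cast hn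
    have hm : (1/2 : ℝ) < ((n:ℝ) + 1) / 2 := by linarith
    have h := gamma_sq_le_mul hm
    rw [show ((n:ℝ) + 1) / 2 - 1/2 = n / 2 by ring,
        show ((n:ℝ) + 1) / 2 + 1/2 = (n + 2) / 2 by ring] at h
    have hrec : Real.Gamma (((n:ℝ) + 2) / 2) = ((n:ℝ)/2) * Real.Gamma ((n:ℝ)/2) := by
      rw [show ((n:ℝ) + 2)/2 = (n:ℝ)/2 + 1 by ring]
      exact Real.Gamma_add_one (by positivity)
    have hG : 0 < Real.Gamma (((n:ℝ)+2)/2) := Real.Gamma_pos_of_pos (by positivity)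
    have hG' : 0 < Real.Gamma (((n:ℝ)+1)/2) := Real.Gamma_pos_of_pos (by positivity)
    have h2 : Real.Gamma (((n:ℝ)+1)/2) ^ 2 ≤ Real.Gamma (((n:ℝ)+2)/2) ^ 2 * (2 / n) := by
      calc Real.Gamma (((n:ℝ)+1)/2) ^ 2 ≤ Real.Gamma ((n:ℝ)/2) * Real.Gamma (((n:ℝ)+2)/2) := h
        _ = Real.Gamma (((n:ℝ)+2)/2) ^ 2 * (2 / n) := by
            rw [hrec]; field_simp
    have h3 : Real.Gamma (((n:ℝ)+1)/2) ^ 2 ≤ (2 * Real.Gamma (((n:ℝ)+2)/2)) ^ 2 := by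
      have : (2:ℝ)/n ≤ 2 := by
        rw [div_le_iff₀ (by positivity)]; nlinarith
      calc Real.Gamma (((n:ℝ)+1)/2) ^ 2 ≤ Real.Gamma (((n:ℝ)+2)/2) ^ 2 * (2 / n) := h2
        _ ≤ (2 * Real.Gamma (((n:ℝ)+2)/2)) ^ 2 := by
            rw [mul_pow]; nlinarith [sq_nonneg (Real.Gamma (((n:ℝ)+2)/2))]
    exact (pow_le_pow_iff_left₀ hG'.le (by positivity) (by norm_num)).mp h3

lemma gamma_half_sq_bound (n : ℕ) :
    (2:ℝ) ^ n * Real.Gamma ((n + 1) / 2) ^ 2 ≤ 4 * (n ! : ℝ) * Real.sqrt π := by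
  have dup := Real.Gamma_mul_Gamma_add_half (((n:ℝ) + 1) / 2)
  rw [show ((n:ℝ)+1)/2 + 1/2 = ((n:ℝ)+2)/2 by ring,
      show (2:ℝ) * (((n:ℝ)+1)/2) = (n:ℝ)+1 by ring] at dup
  have hfac : Real.Gamma ((n:ℝ) + 1) = (n ! : ℝ) := Real.Gamma_nat_eq_factorial n
  have hpow : (2:ℝ) ^ ((1:ℝ) - ((n:ℝ)+1)) = ((2:ℝ) ^ n)⁻¹ := by
    rw [show (1:ℝ) - ((n:ℝ)+1) = -(n:ℝ) by ring, Real.rpow_neg (by norm_num),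
      Real.rpow_natCast]
  rw [hfac, hpow] at dup
  have hG' : 0 < Real.Gamma (((n:ℝ)+1)/2) := Real.Gamma_pos_of_pos (by positivity)
  have key := gamma_half_le n
  have h2n : (0:ℝ) < 2 ^ n := by positivity
  calc (2:ℝ) ^ n * Real.Gamma ((n + 1) / 2) ^ 2
      ≤ (2:ℝ) ^ n * (Real.Gamma (((n:ℝ)+1)/2) * (2 * Real.Gamma (((n:ℝ)+2)/2))) := by
        rw [sq]; gcongr
    _ = 2 * 2 ^ n * (Real.Gamma (((n:ℝ)+1)/2) * Real.Gamma (((n:ℝ)+2)/2)) := by ring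
    _ = 2 * 2 ^ n * ((n ! : ℝ) * ((2:ℝ) ^ n)⁻¹ * √π) := by rw [dup]
    _ = 2 * (n ! : ℝ) * √π := by field_simp
    _ ≤ 4 * (n ! : ℝ) * √π := by
        have : (0:ℝ) ≤ (n ! : ℝ) * √π := by positivity
        nlinarith
lemma integrable_abs_pow_exp_abs (c : ℝ) (n : ℕ) :
    Integrable (fun v : ℝ => |v| ^ n * Real.exp (c * |v| - v ^ 2)) := by
  refine ((integrable_abs_pow_gauss (by norm_num : (0:ℝ) < 1/2) n).const_mul
    (Real.exp (c ^ 2 / 2))).mono' ?_ ?_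
  · apply Continuous.aestronglyMeasurable; continuity
  · filter_upwards with v
    rw [norm_of_nonneg (by positivity), mul_comm (Real.exp (c ^ 2 / 2)), mul_assoc,
      ← Real.exp_add]
    gcongr
    nlinarith [sq_nonneg (|v| - c), _root_.sq_abs v, abs_nonneg v]

lemma norm_aux (k : ℕ) (z : ℂ) (u : ℝ) :
    ‖(2 * Complex.I * u) ^ k * Complex.exp (-(u:ℂ) ^ 2 + 2 * Complex.I * z * u)‖
      = 2 ^ k * |u| ^ k * Real.exp (-2 * z.im * u - u ^ 2) := by
  rw [norm_mul, norm_pow, Complex.norm_exp]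
  have h1 : ‖2 * Complex.I * (u:ℂ)‖ = 2 * |u| := by
    simp
  have h2 : (-(u:ℂ) ^ 2 + 2 * Complex.I * z * u).re = -2 * z.im * u - u ^ 2 := by
    simp [Complex.add_re, Complex.mul_re, Complex.mul_im, pow_two]
    ring
  rw [h1, h2, mul_pow]

lemma cont_aux (k : ℕ) (z : ℂ) : Continuous (fun u : ℝ => (2 * Complex.I * u) ^ k *
    Complex.exp (-(u:ℂ) ^ 2 + 2 * Complex.I * z * u)) := by
  apply Continuous.mul
  · continuity
  · exact Complex.continuous_exp.comp (by continuity)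

lemma dom_aux (k : ℕ) (y z : ℂ) (hz : z ∈ Metric.ball y 1) (u : ℝ) :
    ‖(2 * Complex.I * u) ^ k * Complex.exp (-(u:ℂ) ^ 2 + 2 * Complex.I * z * u)‖
      ≤ 2 ^ k * |u| ^ k * Real.exp ((2 * |y.im| + 2) * |u| - u ^ 2) := by
  rw [norm_aux]
  have him : |z.im| ≤ |y.im| + 1 := by
    have h1 : |z.im - y.im| ≤ ‖z - y‖ := by
      simpa using Complex.abs_im_le_norm (z - y)
    have h2 : ‖z - y‖ ≤ 1 := le_of_lt (by simpa [Metric.mem_ball, Complex.dist_eq] using hz)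
    calc |z.im| ≤ |z.im - y.im| + |y.im| := by
          simpa using abs_add_le (z.im - y.im) y.im
      _ ≤ |y.im| + 1 := by linarith
  have : -2 * z.im * u ≤ 2 * |z.im| * |u| := by
    calc -2 * z.im * u ≤ |(-2 * z.im * u)| := le_abs_self _
      _ = 2 * |z.im| * |u| := by rw [abs_mul, abs_mul]; norm_num
  have hexp : Real.exp (-2 * z.im * u - u ^ 2) ≤ Real.exp ((2 * |y.im| + 2) * |u| - u ^ 2) := by
    apply Real.exp_le_exp.mpr
    nlinarith [abs_nonneg u]
  exact mul_le_mul_of_nonneg_left hexp (by positivity)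

lemma integrable_Fk (k : ℕ) (y z : ℂ) (hz : z ∈ Metric.ball y 1) :
    Integrable (fun u : ℝ => (2 * Complex.I * u) ^ k *
      Complex.exp (-(u:ℂ) ^ 2 + 2 * Complex.I * z * u)) := by
  have hbi : Integrable (fun u : ℝ =>
      2 ^ k * (|u| ^ k * Real.exp ((2 * |y.im| + 2) * |u| - u ^ 2))) :=
    (integrable_abs_pow_exp_abs (2 * |y.im| + 2) k).const_mul _
  refine hbi.mono' (cont_aux k z).aestronglyMeasurable ?_
  filter_upwards with u
  calc ‖_‖ ≤ 2 ^ k * |u| ^ k * Real.exp ((2 * |y.im| + 2) * |u| - u ^ 2) :=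
        dom_aux k y z hz u
    _ = 2 ^ k * (|u| ^ k * Real.exp ((2 * |y.im| + 2) * |u| - u ^ 2)) := by ring

lemma hasDerivAt_int (n : ℕ) (y : ℂ) :
    HasDerivAt (fun z : ℂ => ∫ u : ℝ, (2 * Complex.I * u) ^ n *
        Complex.exp (-(u:ℂ) ^ 2 + 2 * Complex.I * z * u))
      (∫ u : ℝ, (2 * Complex.I * u) ^ (n + 1) *
        Complex.exp (-(u:ℂ) ^ 2 + 2 * Complex.I * y * u)) y := by
  have key := hasDerivAt_integral_of_dominated_loc_of_deriv_le (𝕜 := ℂ)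
    (F := fun z u => (2 * Complex.I * u) ^ n *
        Complex.exp (-(u:ℂ) ^ 2 + 2 * Complex.I * z * u))
    (F' := fun z u => (2 * Complex.I * u) ^ (n + 1) *
        Complex.exp (-(u:ℂ) ^ 2 + 2 * Complex.I * z * u))
    (x₀ := y) (s := Metric.ball y 1)
    (bound := fun u => 2 ^ (n+1) * (|u| ^ (n+1) * Real.exp ((2 * |y.im| + 2) * |u| - u ^ 2)))
    (Metric.ball_mem_nhds y one_pos)
    (Filter.Eventually.of_forall fun z => (cont_aux n z).aestronglyMeasurable)
    (integrable_Fk n y y (Metric.mem_ball_self one_pos))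
    ((cont_aux (n+1) y).aestronglyMeasurable)
    ?_ ?_ ?_
  · exact key.2
  · filter_upwards with u
    intro z hz
    calc ‖_‖ ≤ 2 ^ (n+1) * |u| ^ (n+1) * Real.exp ((2 * |y.im| + 2) * |u| - u ^ 2) :=
          dom_aux (n+1) y z hz u
      _ = _ := by ring
  · exact (integrable_abs_pow_exp_abs (2 * |y.im| + 2) (n+1)).const_mul _
  · filter_upwards with u
    intro z hz
    have hd : HasDerivAt (fun z : ℂ => Complex.exp (-(u:ℂ) ^ 2 + 2 * Complex.I * z * u))
        (2 * Complex.I * u * Complex.exp (-(u:ℂ) ^ 2 + 2 * Complex.I * z * u)) z := by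
      have hlin : HasDerivAt (fun z : ℂ => -(u:ℂ) ^ 2 + 2 * Complex.I * z * u)
          (2 * Complex.I * u) z := by
        simpa using ((hasDerivAt_id z).const_mul (2 * Complex.I)).mul_const (u:ℂ)
          |>.const_add (-(u:ℂ) ^ 2)
      simpa [mul_comm] using hlin.cexp
    have := hd.const_mul ((2 * Complex.I * u) ^ n)
    exact this.congr_deriv (by rw [pow_succ]; ring)

lemma sqrt_pi_ne : ((Real.sqrt π : ℝ) : ℂ) ≠ 0 := by
  simp only [ne_eq, Complex.ofReal_eq_zero]
  positivity

lemma cpow_pi_half : ((π : ℂ) / - (-1)) ^ ((1:ℂ)/2) = ((Real.sqrt π : ℝ) : ℂ) := by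
  rw [Real.sqrt_eq_rpow]
  rw [show ((π : ℂ) / - (-1)) = ((π : ℝ) : ℂ) by norm_num]
  rw [show ((1:ℂ)/2) = (((1/2 : ℝ)):ℂ) by norm_num, ← Complex.ofReal_cpow Real.pi_pos.le]

lemma intrep (n : ℕ) (y : ℂ) :
    iteratedDeriv n (fun z : ℂ => Complex.exp (-z ^ 2)) y
      = (((Real.sqrt π : ℝ) : ℂ))⁻¹ * ∫ u : ℝ, (2 * Complex.I * u) ^ n *
          Complex.exp (-(u:ℂ) ^ 2 + 2 * Complex.I * y * u) := by
  induction n generalizing y with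
  | zero =>
    have h := integral_cexp_quadratic (b := -1) (by norm_num) (2 * Complex.I * y) 0
    have e1 : ∀ u : ℝ, Complex.exp ((-1:ℂ) * u ^ 2 + (2 * Complex.I * y) * u + 0)
        = (2 * Complex.I * u) ^ 0 * Complex.exp (-(u:ℂ) ^ 2 + 2 * Complex.I * y * u) := by
      intro u; rw [pow_zero, one_mul]; congr 1; ring
    rw [show (fun u : ℝ => Complex.exp ((-1:ℂ) * u ^ 2 + (2 * Complex.I * y) * u + 0))
        = fun u : ℝ => (2 * Complex.I * u) ^ 0 * Complex.exp (-(u:ℂ) ^ 2 + 2 * Complex.I * y * u)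
        from funext e1] at h
    rw [iteratedDeriv_zero, h, cpow_pi_half]
    rw [show (0 : ℂ) - (2 * Complex.I * y) ^ 2 / (4 * -1) = -y ^ 2 by
      rw [mul_pow, mul_pow, Complex.I_sq]; ring]
    rw [← mul_assoc, inv_mul_cancel₀ sqrt_pi_ne, one_mul]
  | succ n ih =>
    rw [iteratedDeriv_succ]
    have hfun : iteratedDeriv n (fun z : ℂ => Complex.exp (-z ^ 2))
        = fun w : ℂ => (((Real.sqrt π : ℝ) : ℂ))⁻¹ * ∫ u : ℝ, (2 * Complex.I * u) ^ n *
            Complex.exp (-(u:ℂ) ^ 2 + 2 * Complex.I * w * u) := funext ih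
    rw [hfun]
    exact (((hasDerivAt_int n y).const_mul ((((Real.sqrt π : ℝ) : ℂ))⁻¹))).deriv
-- new pieces
lemma moment_bound {a : ℝ} (ha : 0 < a) (ha1 : a < 1) (c : ℝ) (n : ℕ) :
    ∫ v : ℝ, |v| ^ n * Real.exp (c * v - v ^ 2)
      ≤ Real.exp (c ^ 2 / (4 * (1 - a))) * ((Real.sqrt a ^ (n + 1))⁻¹ * Real.Gamma ((n + 1) / 2)) := by
  have h1a : (0:ℝ) < 1 - a := by linarith
  have hpt : ∀ v : ℝ, |v| ^ n * Real.exp (c * v - v ^ 2)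
      ≤ Real.exp (c ^ 2 / (4 * (1 - a))) * (|v| ^ n * Real.exp (-a * v ^ 2)) := by
    intro v
    rw [mul_comm (Real.exp (c ^ 2 / (4 * (1 - a)))), mul_assoc, ← Real.exp_add]
    have hexp : Real.exp (c * v - v ^ 2) ≤ Real.exp (-a * v ^ 2 + c ^ 2 / (4 * (1 - a))) := by
      apply Real.exp_le_exp.mpr
      have key : 0 ≤ (c - 2 * (1 - a) * v) ^ 2 := sq_nonneg _
      have h4 : (0:ℝ) < 4 * (1 - a) := by linarith
      rw [← sub_nonneg]
      have expand : -a * v ^ 2 + c ^ 2 / (4 * (1 - a)) - (c * v - v ^ 2)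
          = (c - 2 * (1 - a) * v) ^ 2 / (4 * (1 - a)) := by
        field_simp
        ring
      rw [expand]
      positivity
    exact mul_le_mul_of_nonneg_left hexp (by positivity)
  have hmono := integral_mono (integrable_abs_pow_exp_lin c n)
    (((integrable_abs_pow_gauss ha n).const_mul (Real.exp (c ^ 2 / (4 * (1 - a)))))) hpt
  calc ∫ v : ℝ, |v| ^ n * Real.exp (c * v - v ^ 2)
      ≤ ∫ v : ℝ, Real.exp (c ^ 2 / (4 * (1 - a))) * (|v| ^ n * Real.exp (-a * v ^ 2)) := hmono
    _ = Real.exp (c ^ 2 / (4 * (1 - a))) * ∫ v : ℝ, |v| ^ n * Real.exp (-a * v ^ 2) := by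
        rw [integral_const_mul]
    _ = Real.exp (c ^ 2 / (4 * (1 - a))) * ((Real.sqrt a ^ (n + 1))⁻¹ * Real.Gamma ((n + 1) / 2)) := by
        rw [integral_abs_pow_gauss ha n]
        congr 2
        rw [Real.sqrt_eq_rpow, ← Real.rpow_natCast (a ^ ((1:ℝ)/2)) (n+1), ← Real.rpow_mul ha.le,
          ← Real.rpow_neg ha.le]
        push_cast
        ring_nf

lemma alg_aux (n : ℕ) (d s1 aa fn g : ℝ) (ha : aa ≠ 0) (hf : fn ≠ 0) :
    d * s1 ^ n / (aa ^ (n+1) * fn) * (4 * fn * g) = d * (4 * g) / aa * (s1 / aa) ^ n := by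
  rw [div_pow]
  field_simp
  ring

lemma re_aux (z : ℂ) (u : ℝ) :
    (-(u:ℂ) ^ 2 + 2 * Complex.I * z * u).re = -2 * z.im * u - u ^ 2 := by
  simp [Complex.add_re, Complex.mul_re, Complex.mul_im, pow_two]
  ring

lemma final_cpow (s : ℂ) (h : 0 < (1 - s^2).re) :
    ((π:ℂ) / (1 - s^2)) ^ ((1:ℂ)/2) = ((Real.sqrt π : ℝ):ℂ) * (1 - s^2) ^ (-(1/2) : ℂ) := by
  set w := 1 - s^2 with hw
  have hw0 : w ≠ 0 := by
    intro hww; rw [hww] at h; simp at h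
  have harg : w.arg ≠ π := by
    intro hh
    rw [Complex.arg_eq_pi_iff] at hh
    linarith [hh.1]
  have hw0' : w⁻¹ ≠ 0 := inv_ne_zero hw0
  have hpi0 : ((π:ℝ):ℂ) ≠ 0 := Complex.ofReal_ne_zero.mpr Real.pi_ne_zero
  rw [div_eq_mul_inv, mul_comm ((π:ℝ):ℂ) w⁻¹,
      Complex.cpow_def_of_ne_zero (mul_ne_zero hw0' hpi0),
      Complex.log_mul_ofReal π Real.pi_pos _ hw0', add_mul, Complex.exp_add,
      ← Complex.cpow_def_of_ne_zero hw0', Complex.inv_cpow _ _ harg, ← Complex.cpow_neg]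
  congr 1
  rw [show ((Real.log π : ℝ):ℂ) * ((1:ℂ)/2) = ((Real.log π / 2 : ℝ) : ℂ) by push_cast; ring,
    ← Complex.ofReal_exp]
  congr 1
  rw [Real.sqrt_eq_rpow, Real.rpow_def_of_pos Real.pi_pos]
  ring_nf

/-- Mehler's formula; `(1−s²)^{−1/2}` is the principal branch complex power. -/
theorem stmt_3 (x y s : ℂ) (hs : ‖s‖ < 1) :
    ∑' n : ℕ, (s / 2) ^ n / (n ! : ℂ) * (Hphys n x * Hphys n y) =
      (1 - s ^ 2) ^ (-(1 / 2) : ℂ) *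
        Complex.exp ((2 * x * y * s - (x ^ 2 + y ^ 2) * s ^ 2) / (1 - s ^ 2)) := by
  classical
  set a : ℝ := (1 + ‖s‖) / 2 with ha_def
  have hs0 : (0:ℝ) ≤ ‖s‖ := norm_nonneg s
  have ha0 : 0 < a := by rw [ha_def]; linarith
  have ha1 : a < 1 := by rw [ha_def]; linarith
  have hsa : ‖s‖ < a := by rw [ha_def]; linarith
  set F : ℕ → ℝ → ℂ := fun n u =>
    Hphys n x * (-(s * (Complex.I * u))) ^ n / (n ! : ℂ) *
      Complex.exp (-(u:ℂ) ^ 2 + 2 * Complex.I * y * u) with hFdef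
  set A : ℂ := Complex.exp (y ^ 2) * (((Real.sqrt π : ℝ) : ℂ))⁻¹ with hA
  have hFeq : ∀ n : ℕ, F n = fun u : ℝ =>
      ((s/2) ^ n * (-1:ℂ) ^ n / (n ! : ℂ) * Hphys n x) *
        ((2 * Complex.I * u) ^ n * Complex.exp (-(u:ℂ) ^ 2 + 2 * Complex.I * y * u)) := by
    intro n; funext u
    simp only [hFdef]
    rw [show (-(s * (Complex.I * (u:ℂ)))) ^ n
        = (s/2) ^ n * (-1:ℂ) ^ n * (2 * Complex.I * u) ^ n by
      rw [← mul_pow, ← mul_pow]; congr 1; ring]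
    ring
  have hintF : ∀ n : ℕ, Integrable (F n) := by
    intro n
    rw [hFeq n]
    exact (integrable_Fk n y y (Metric.mem_ball_self one_pos)).const_mul _
  have hmeasF : ∀ n : ℕ, AEStronglyMeasurable (F n) (volume : Measure ℝ) := fun n =>
    (hintF n).aestronglyMeasurable
  -- term identity
  have hterm : ∀ n : ℕ, (s / 2) ^ n / (n ! : ℂ) * (Hphys n x * Hphys n y)
      = A * ∫ u : ℝ, F n u := by
    intro n
    have hHy : Hphys n y = (-1:ℂ) ^ n * Complex.exp (y ^ 2) *
        ((((Real.sqrt π : ℝ) : ℂ))⁻¹ * ∫ u : ℝ, (2 * Complex.I * u) ^ n *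
          Complex.exp (-(u:ℂ) ^ 2 + 2 * Complex.I * y * u)) := by
      rw [Hphys, intrep n y]
    have hint_eq : ∫ u : ℝ, F n u = ((s/2) ^ n * (-1:ℂ) ^ n / (n ! : ℂ) * Hphys n x) *
        ∫ u : ℝ, (2 * Complex.I * u) ^ n *
          Complex.exp (-(u:ℂ) ^ 2 + 2 * Complex.I * y * u) := by
      rw [hFeq n, integral_const_mul]
    rw [hHy, hint_eq, hA]
    ring
  -- pointwise sum
  have hptsum : ∀ u : ℝ, HasSum (fun n => F n u)
      (Complex.exp ((s^2 - 1) * (u:ℂ)^2 + (2 * Complex.I * (y - x * s)) * u + 0)) := by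
    intro u
    have h := (hasSum_gen x (-(s * (Complex.I * u)))).mul_right
      (Complex.exp (-(u:ℂ) ^ 2 + 2 * Complex.I * y * u))
    have hval : Complex.exp (2 * x * (-(s * (Complex.I * u))) - (-(s * (Complex.I * u))) ^ 2) *
        Complex.exp (-(u:ℂ) ^ 2 + 2 * Complex.I * y * u)
        = Complex.exp ((s^2 - 1) * (u:ℂ)^2 + (2 * Complex.I * (y - x * s)) * u + 0) := by
      rw [← Complex.exp_add]
      congr 1
      have hI : Complex.I ^ 2 = -1 := Complex.I_sq
      ring_nf
      rw [Complex.I_sq]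
      ring
    rw [← hval]
    exact h
  -- norm of F n u
  have hnormF : ∀ (n : ℕ) (u : ℝ), ‖F n u‖
      = ‖Hphys n x‖ / (n ! : ℝ) * ((‖s‖ * |u|) ^ n * Real.exp (-2 * y.im * u - u ^ 2)) := by
    intro n u
    simp only [hFdef]
    rw [norm_mul, norm_div, norm_mul, norm_pow, norm_neg, norm_mul, norm_mul,
      Complex.norm_exp, re_aux]
    simp only [Complex.norm_I, Complex.norm_natCast, Complex.norm_real, Real.norm_eq_abs]
    ring
  -- bound on ‖Hphys n x‖
  have hHx : ∀ n : ℕ, ‖Hphys n x‖ ≤ Real.exp ((x^2).re) * (Real.sqrt π)⁻¹ *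
      (2 ^ n * ∫ v : ℝ, |v| ^ n * Real.exp (-2 * x.im * v - v ^ 2)) := by
    intro n
    rw [Hphys, intrep n x]
    rw [norm_mul, norm_mul, norm_pow, norm_neg, norm_one, one_pow, one_mul, norm_mul,
      Complex.norm_exp, norm_inv, Complex.norm_real,
      Real.norm_eq_abs, _root_.abs_of_nonneg (Real.sqrt_nonneg _)]
    have hnormJ : ‖∫ u : ℝ, (2 * Complex.I * u) ^ n *
            Complex.exp (-(u:ℂ) ^ 2 + 2 * Complex.I * x * u)‖
          ≤ 2 ^ n * ∫ v : ℝ, |v| ^ n * Real.exp (-2 * x.im * v - v ^ 2) := by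
      calc ‖∫ u : ℝ, (2 * Complex.I * u) ^ n *
            Complex.exp (-(u:ℂ) ^ 2 + 2 * Complex.I * x * u)‖
          ≤ ∫ u : ℝ, ‖(2 * Complex.I * u) ^ n *
            Complex.exp (-(u:ℂ) ^ 2 + 2 * Complex.I * x * u)‖ :=
            norm_integral_le_integral_norm _
        _ = ∫ u : ℝ, 2 ^ n * (|u| ^ n * Real.exp (-2 * x.im * u - u ^ 2)) := by
            congr 1; funext u; rw [norm_aux]; ring
        _ = 2 ^ n * ∫ v : ℝ, |v| ^ n * Real.exp (-2 * x.im * v - v ^ 2) := by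
            rw [integral_const_mul]
    rw [← mul_assoc]
    exact mul_le_mul_of_nonneg_left hnormJ
      (mul_nonneg (Real.exp_nonneg _) (inv_nonneg.mpr (Real.sqrt_nonneg _)))
  -- abbreviations
  set Dx := Real.exp ((x^2).re) * (Real.sqrt π)⁻¹ with hDx_def
  set Ex := Real.exp ((-2*x.im)^2/(4*(1-a))) with hEx_def
  set Ey := Real.exp ((-2*y.im)^2/(4*(1-a))) with hEy_def
  set K := Dx * Ex * Ey * (4 * Real.sqrt π) / a with hK_def
  set r := ‖s‖ / a with hr_def
  have hr0 : 0 ≤ r := by positivity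
  have hr1 : r < 1 := (div_lt_one ha0).mpr hsa
  have hfacpos : ∀ n : ℕ, (0:ℝ) < (n ! : ℝ) := fun n => by
    exact_mod_cast Nat.factorial_pos n
  -- the key integral bound
  have key : ∀ n : ℕ, ∫ u : ℝ, ‖F n u‖ ≤ K * r ^ n := by
    intro n
    have hMx := moment_bound ha0 ha1 (-2*x.im) n
    have hMy := moment_bound ha0 ha1 (-2*y.im) n
    set Γn := Real.Gamma ((n+1)/2) with hΓn_def
    have hΓ0 : 0 ≤ Γn := (Real.Gamma_pos_of_pos (by positivity)).le
    set P := (Real.sqrt a) ^ (n+1) with hP_def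
    have hP0 : 0 < P := by positivity
    have hPP : P * P = a ^ (n+1) := by
      rw [hP_def, ← mul_pow, Real.mul_self_sqrt ha0.le]
    have hMy0 : (0:ℝ) ≤ ∫ u : ℝ, |u| ^ n * Real.exp (-2 * y.im * u - u ^ 2) :=
      integral_nonneg fun u => by positivity
    have hMx0 : (0:ℝ) ≤ ∫ v : ℝ, |v| ^ n * Real.exp (-2 * x.im * v - v ^ 2) :=
      integral_nonneg fun v => by positivity
    have step1 : ∫ u : ℝ, ‖F n u‖ = (‖Hphys n x‖ / (n ! : ℝ) * ‖s‖ ^ n) *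
        ∫ u : ℝ, |u| ^ n * Real.exp (-2 * y.im * u - u ^ 2) := by
      rw [show (fun u : ℝ => ‖F n u‖) = fun u : ℝ => (‖Hphys n x‖ / (n ! : ℝ) * ‖s‖ ^ n)
          * (|u| ^ n * Real.exp (-2 * y.im * u - u ^ 2)) from
        funext fun u => by rw [hnormF n u, mul_pow]; ring]
      rw [integral_const_mul]
    rw [step1]
    calc (‖Hphys n x‖ / (n ! : ℝ) * ‖s‖ ^ n) *
          ∫ u : ℝ, |u| ^ n * Real.exp (-2 * y.im * u - u ^ 2)
        ≤ ((Dx * (2 ^ n * (Ex * (P⁻¹ * Γn)))) / (n ! : ℝ) * ‖s‖ ^ n) * (Ey * (P⁻¹ * Γn)) := by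
          have h1 : ‖Hphys n x‖ ≤ Dx * (2 ^ n * (Ex * (P⁻¹ * Γn))) := by
            refine (hHx n).trans ?_
            gcongr
          gcongr
      _ = (Dx * Ex * Ey * ‖s‖ ^ n / (a ^ (n+1) * (n ! : ℝ))) * (2 ^ n * Γn ^ 2) := by
          rw [← hPP]
          field_simp
      _ ≤ (Dx * Ex * Ey * ‖s‖ ^ n / (a ^ (n+1) * (n ! : ℝ))) * (4 * (n ! : ℝ) * Real.sqrt π) := by
          exact mul_le_mul_of_nonneg_left (gamma_half_sq_bound n) (by positivity)
      _ = K * r ^ n := by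
          rw [hK_def, hr_def]
          exact alg_aux n (Dx * Ex * Ey) ‖s‖ a (n ! : ℝ) (Real.sqrt π)
            ha0.ne' (hfacpos n).ne'
  -- summability
  have hsummable : Summable (fun n : ℕ => K * r ^ n) :=
    (summable_geometric_of_lt_one hr0 hr1).mul_left K
  have hK0 : 0 ≤ K := by positivity
  have hlint : ∑' n : ℕ, ∫⁻ u : ℝ, ‖F n u‖₊ ∂(volume) ≠ ⊤ := by
    refine ne_top_of_le_ne_top
      (show (ENNReal.ofReal (∑' n : ℕ, K * r ^ n)) ≠ ⊤ from ENNReal.ofReal_ne_top) ?_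
    rw [ENNReal.ofReal_tsum_of_nonneg (fun n => by positivity) hsummable]
    refine le_trans (le_of_eq (tsum_congr fun n =>
      (MeasureTheory.ofReal_integral_norm_eq_lintegral_enorm (hintF n)).symm)) ?_
    exact ENNReal.tsum_le_tsum fun n => ENNReal.ofReal_le_ofReal (key n)
  -- re conditions
  have hre : (s^2 - 1).re < 0 := by
    have h1 : (s^2).re ≤ ‖s^2‖ := Complex.re_le_norm _
    have h2 : ‖s^2‖ = ‖s‖^2 := by rw [norm_pow]
    have h3 : ‖s‖^2 < 1 := by nlinarith
    have : (s^2 - 1).re = (s^2).re - 1 := by simp [Complex.sub_re, Complex.one_re]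
    rw [this]; linarith
  have hre' : 0 < (1 - s^2).re := by
    have : (1 - s^2).re = 1 - (s^2).re := by simp [Complex.sub_re, Complex.one_re]
    have h2 : (s^2 - 1).re = (s^2).re - 1 := by simp [Complex.sub_re, Complex.one_re]
    rw [this]; rw [h2] at hre; linarith
  have hns : (1 : ℂ) - s^2 ≠ 0 := by
    intro hh; rw [hh] at hre'; simp at hre'
  have hns' : (s^2 : ℂ) - 1 ≠ 0 := by
    intro hh
    apply hns
    have : (1:ℂ) - s^2 = -(s^2 - 1) := by ring
    rw [this, hh]; ring
  -- main computation
  calc ∑' n : ℕ, (s / 2) ^ n / (n ! : ℂ) * (Hphys n x * Hphys n y)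
      = ∑' n : ℕ, A * ∫ u : ℝ, F n u := tsum_congr hterm
    _ = A * ∑' n : ℕ, ∫ u : ℝ, F n u := tsum_mul_left
    _ = A * ∫ u : ℝ, ∑' n : ℕ, F n u := by
        rw [← MeasureTheory.integral_tsum hmeasF hlint]
    _ = A * ∫ u : ℝ, Complex.exp ((s^2 - 1) * (u:ℂ)^2 + (2 * Complex.I * (y - x * s)) * u + 0) := by
        rw [show (fun u : ℝ => ∑' n : ℕ, F n u) = fun u : ℝ =>
          Complex.exp ((s^2 - 1) * (u:ℂ)^2 + (2 * Complex.I * (y - x * s)) * u + 0) from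
          funext fun u => (hptsum u).tsum_eq]
    _ = A * (((π:ℂ) / -(s^2-1)) ^ ((1:ℂ)/2) *
          Complex.exp (0 - (2 * Complex.I * (y - x * s))^2/(4*(s^2-1)))) := by
        rw [integral_cexp_quadratic hre]
    _ = (1 - s ^ 2) ^ (-(1 / 2) : ℂ) *
        Complex.exp ((2 * x * y * s - (x ^ 2 + y ^ 2) * s ^ 2) / (1 - s ^ 2)) := by
        rw [show -(s^2 - 1) = 1 - s^2 by ring, final_cpow s hre', hA]
        have hE : Complex.exp (y^2) *
            Complex.exp (0 - (2 * Complex.I * (y - x * s))^2/(4*(s^2-1)))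
            = Complex.exp ((2 * x * y * s - (x ^ 2 + y ^ 2) * s ^ 2) / (1 - s ^ 2)) := by
          rw [← Complex.exp_add]
          congr 1
          rw [show (2 * Complex.I * (y - x * s))^2 = -(4*(y - x*s)^2) by
            rw [mul_pow, mul_pow, Complex.I_sq]; ring]
          field_simp
          ring
        calc Complex.exp (y ^ 2) * (((Real.sqrt π : ℝ):ℂ))⁻¹ *
              ((((Real.sqrt π : ℝ):ℂ)) * (1 - s^2) ^ (-(1/2) : ℂ) *
                Complex.exp (0 - (2 * Complex.I * (y - x * s))^2/(4*(s^2-1))))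
            = (1 - s^2) ^ (-(1/2) : ℂ) * (Complex.exp (y ^ 2) *
                Complex.exp (0 - (2 * Complex.I * (y - x * s))^2/(4*(s^2-1)))) *
                ((((Real.sqrt π : ℝ):ℂ))⁻¹ * (((Real.sqrt π : ℝ):ℂ))) := by ring
          _ = (1 - s ^ 2) ^ (-(1 / 2) : ℂ) *
              Complex.exp ((2 * x * y * s - (x ^ 2 + y ^ 2) * s ^ 2) / (1 - s ^ 2)) := by
              rw [inv_mul_cancel₀ sqrt_pi_ne, mul_one, hE]
end

section
/- For every complex w with |w| < 1, the Gaussian integral ∫_{ℂ} exp(−|y|² − (1/2)(y²·w̄ + ȳ²·w)) d²y equals π·(1−|w|²)^{−1/2}, where d²y is Lebesgue measure on ℂ ≅ ℝ². -/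
open ComplexConjugate

open MeasureTheory Complex in
private lemma key_id (a b u v : ℝ) :
    -((‖((u:ℂ) + v*I)‖ ^ 2 : ℝ) : ℂ) - (1 / 2) * (((u:ℂ)+v*I) ^ 2 * conj ((a:ℂ)+b*I)
      + (conj ((u:ℂ)+v*I)) ^ 2 * ((a:ℂ)+b*I)) =
      -((1 - a : ℝ) : ℂ) * (v:ℂ)^2 + ((-(2*b*u) : ℝ):ℂ) * v + (-(((1+a)*u^2 : ℝ)):ℂ) := by
  have h1 : ‖((u:ℂ) + v*I)‖ ^ 2 = u^2 + v^2 := by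
    rw [Complex.sq_norm, Complex.normSq_add_mul_I]
  have h2 : ∀ x y : ℝ, conj ((x:ℂ) + y*I) = (x:ℂ) - y*I := fun x y => by simp; ring
  rw [h1, h2, h2]
  push_cast
  ring_nf
  rw [Complex.I_sq]
  ring

open MeasureTheory Complex in
private lemma aux_int (a b : ℝ) (ha1 : (0:ℝ) < 1 - a)
    (hD : (0:ℝ) < 1 - (a^2+b^2)) (hw : ‖(a:ℂ)+b*I‖ < 1) :
    ∫ p : ℝ × ℝ, Complex.exp (-((1-a:ℝ):ℂ) * (p.2:ℂ)^2 + ((-(2*b*p.1) : ℝ):ℂ) * p.2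
        + (-(((1+a)*p.1^2 : ℝ)):ℂ)) =
      (Real.pi : ℂ) * (((1 - ‖(a:ℂ)+b*I‖ ^ 2 : ℝ) ^ (-(1 / 2) : ℝ) : ℝ) : ℂ) := by
  have hab : ‖((a:ℂ) + b*I)‖ ^ 2 = a^2 + b^2 := by
    rw [Complex.sq_norm, Complex.normSq_add_mul_I]
  set r : ℝ := ‖(a:ℂ)+b*I‖ with hrdef
  have hn : 0 ≤ r := norm_nonneg _
  set c : ℝ := 1 - r with hc
  have hc0 : 0 < c := by linarith
  have hbound : ∀ p : ℝ × ℝ,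
      ‖Complex.exp (-((1-a:ℝ):ℂ) * (p.2:ℂ)^2 + ((-(2*b*p.1) : ℝ):ℂ) * p.2 + (-(((1+a)*p.1^2 : ℝ)):ℂ))‖
        ≤ Real.exp (-c * p.1^2) * Real.exp (-c * p.2^2) := by
    rintro ⟨u, v⟩
    rw [Complex.norm_exp, ← Real.exp_add]
    apply Real.exp_le_exp.mpr
    have hre : (-((1-a:ℝ):ℂ) * (v:ℂ)^2 + ((-(2*b*u) : ℝ):ℂ) * v + (-(((1+a)*u^2 : ℝ)):ℂ)).re
        = -(1-a)*v^2 + (-(2*b*u))*v + (-((1+a)*u^2)) := by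
      simp [Complex.add_re, Complex.mul_re, ← Complex.ofReal_pow]
    rw [hre]
    simp only
    have heq : r^2*(u^2+v^2)^2 = (a^2+b^2)*(u^2+v^2)^2 := by rw [hab]
    have h1 : (a*(u^2-v^2)+2*b*u*v)^2 ≤ (r*(u^2+v^2))^2 := by
      nlinarith [sq_nonneg (b*(u^2-v^2)-2*a*u*v), heq]
    have key : r*(u^2+v^2) + (a*(u^2-v^2)+2*b*u*v) ≥ 0 := by
      nlinarith [mul_nonneg hn (add_nonneg (sq_nonneg u) (sq_nonneg v)), h1]
    nlinarith [key]
  have hint : Integrable (fun p : ℝ × ℝ => Complex.exp (-((1-a:ℝ):ℂ) * (p.2:ℂ)^2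
      + ((-(2*b*p.1) : ℝ):ℂ) * p.2 + (-(((1+a)*p.1^2 : ℝ)):ℂ))) := by
    apply Integrable.mono (Integrable.mul_prod (integrable_exp_neg_mul_sq hc0) (integrable_exp_neg_mul_sq hc0))
    · apply Continuous.aestronglyMeasurable; fun_prop
    · filter_upwards with p
      rw [Real.norm_of_nonneg (by positivity)]
      exact hbound p
  rw [Measure.volume_eq_prod] at hint ⊢
  rw [MeasureTheory.integral_prod _ hint]
  have hBre : (-((1-a:ℝ):ℂ)).re < 0 := by simpa using ha1
  have hinner : ∀ u : ℝ, (∫ v : ℝ, Complex.exp (-((1-a:ℝ):ℂ) * (v:ℂ)^2 + ((-(2*b*u) : ℝ):ℂ) * v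
        + (-(((1+a)*u^2 : ℝ)):ℂ)))
      = (↑Real.pi / ((1-a:ℝ):ℂ)) ^ (1/2 : ℂ)
        * Complex.exp (-(((1-(a^2+b^2))/(1-a) : ℝ):ℂ) * (u:ℂ)^2 + 0 * u + 0) := by
    intro u
    rw [integral_cexp_quadratic hBre]
    congr 1
    · norm_num
    · congr 1
      have hne : (1:ℂ) - (a:ℂ) ≠ 0 := by
        intro h
        have : (1:ℝ) - a = 0 := by exact_mod_cast h
        linarith
      have hne2 : (a:ℂ) - 1 ≠ 0 := by
        intro h
        apply hne
        rw [← neg_sub] at h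
        simpa using neg_eq_zero.mp h
      push_cast
      field_simp [hne, hne2]
      ring
  simp_rw [hinner, MeasureTheory.integral_const_mul]
  have hB2re : (-(((1-(a^2+b^2))/(1-a) : ℝ):ℂ)).re < 0 := by
    simp only [neg_re, ofReal_re, neg_neg, Left.neg_neg_iff]
    positivity
  rw [integral_cexp_quadratic hB2re]
  rw [hab]
  simp only [neg_neg, ne_eq, OfNat.ofNat_ne_zero, not_false_eq_true, zero_pow, zero_div, sub_zero,
    Complex.exp_zero, mul_one]
  rw [show (1/2:ℂ) = ((1/2:ℝ):ℂ) by norm_num]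
  rw [show (Real.pi:ℂ) / ((1-a:ℝ):ℂ) = (((Real.pi/(1-a) : ℝ)):ℂ) by push_cast; ring]
  rw [show (Real.pi:ℂ) / (((1-(a^2+b^2))/(1-a) : ℝ):ℂ)
      = (((Real.pi/((1-(a^2+b^2))/(1-a)) : ℝ)):ℂ) by push_cast; ring]
  rw [← Complex.ofReal_cpow (by positivity), ← Complex.ofReal_cpow (by positivity),
    ← Complex.ofReal_mul]
  norm_cast
  rw [← Real.mul_rpow (by positivity) (by positivity)]
  have h5 : Real.pi/(1-a) * (Real.pi/((1-(a^2+b^2))/(1-a))) = Real.pi^2/(1-(a^2+b^2)) := by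
    field_simp
  rw [h5, Real.div_rpow (by positivity) hD.le]
  have h6 : ((Real.pi:ℝ)^2)^(1/2:ℝ) = Real.pi := by
    rw [← Real.rpow_natCast Real.pi 2, ← Real.rpow_mul Real.pi_pos.le]
    norm_num
  rw [h6, Real.rpow_neg hD.le]
  ring

/-- Gaussian integral `∫_ℂ exp(−|y|² − (1/2)(y²w̄ + ȳ²w)) d²y = π(1−|w|²)^{−1/2}`
for `|w| < 1`, with respect to Lebesgue measure on `ℂ ≅ ℝ²`. -/
theorem stmt_5 (w : ℂ) (hw : ‖w‖ < 1) :
    ∫ y : ℂ, Complex.exp (-((‖y‖ ^ 2 : ℝ) : ℂ) - (1 / 2) * (y ^ 2 * conj w + (conj y) ^ 2 * w)) =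
      (Real.pi : ℂ) * (((1 - ‖w‖ ^ 2 : ℝ) ^ (-(1 / 2) : ℝ) : ℝ) : ℂ) := by
  open Complex MeasureTheory in
  obtain ⟨a, b⟩ := w
  rw [Complex.mk_eq_add_mul_I] at hw ⊢
  have hab : ‖((a:ℂ) + b*I)‖ ^ 2 = a^2 + b^2 := by
    rw [Complex.sq_norm, Complex.normSq_add_mul_I]
  have ha : |a| < 1 := by
    calc |a| = |((a:ℂ)+b*I).re| := by simp
    _ ≤ ‖(a:ℂ)+b*I‖ := Complex.abs_re_le_norm _
    _ < 1 := hw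
  have ha1 : (0:ℝ) < 1 - a := by linarith [abs_lt.mp ha |>.2]
  have hD : (0:ℝ) < 1 - (a^2 + b^2) := by
    have := hab ▸ (pow_lt_one₀ (norm_nonneg _) hw two_ne_zero)
    linarith
  rw [← (Complex.volume_preserving_equiv_real_prod.symm).integral_comp
    Complex.measurableEquivRealProd.symm.measurableEmbedding]
  simp only [Complex.measurableEquivRealProd_symm_apply, Complex.mk_eq_add_mul_I]
  simp_rw [key_id a b]
  exact aux_int a b ha1 hD hw
end

section
/- Let ρ(z,w) = (1−|w|²)^p · exp(−(2|z|² + z²w̄ + z̄²w)/(2(1−|w|²))) for z ∈ ℂ, |w| < 1, p ∈ ℝ. Then ρ satisfies the partial differential equation w·∂ρ/∂z − ∂ρ/∂z̄ = z·ρ. -/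
open ComplexConjugate

/-- Wirtinger derivative `∂/∂z = (1/2)(∂/∂x − i ∂/∂y)` of `f : ℂ → ℂ`,
viewed as a real-differentiable map. -/
noncomputable def Dz (f : ℂ → ℂ) (z : ℂ) : ℂ :=
  (1 / 2) * (fderiv ℝ f z 1 - Complex.I * fderiv ℝ f z Complex.I)

/-- Wirtinger derivative `∂/∂z̄ = (1/2)(∂/∂x + i ∂/∂y)`. -/
noncomputable def Dzbar (f : ℂ → ℂ) (z : ℂ) : ℂ :=
  (1 / 2) * (fderiv ℝ f z 1 + Complex.I * fderiv ℝ f z Complex.I)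

/-- `ρ(z,w) = (1−|w|²)^p exp(−(2|z|² + z²w̄ + z̄²w)/(2(1−|w|²)))`
(the quantity `z²w̄ + z̄²w` is real, so we take its real part). -/
noncomputable def rho (p : ℝ) (z w : ℂ) : ℝ :=
  (1 - ‖w‖ ^ 2) ^ p *
    Real.exp (-((2 * ‖z‖ ^ 2 + (z ^ 2 * conj w + (conj z) ^ 2 * w).re) /
      (2 * (1 - ‖w‖ ^ 2))))

theorem stmt_7 (p : ℝ) (z w : ℂ) (hw : ‖w‖ < 1) :
    w * Dz (fun z' => ((rho p z' w : ℝ) : ℂ)) z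
      - Dzbar (fun z' => ((rho p z' w : ℝ) : ℂ)) z = z * ((rho p z w : ℝ) : ℂ) := by
  have hc0 : (1 : ℝ) - ‖w‖ ^ 2 ≠ 0 := by nlinarith [norm_nonneg w]
  set s : ℂ := ((‖w‖:ℂ)) ^ 2 with hs
  have hcC : ((2 : ℂ) * (1 - s)) ≠ 0 := by
    simp only [ne_eq, mul_eq_zero, OfNat.ofNat_ne_zero, false_or, hs]
    intro h
    have := congrArg Complex.re h
    simp [Complex.sub_re, Complex.one_re, ← Complex.ofReal_pow] at this
    exact hc0 (by simpa using this)
  set C : ℂ := (((1 - ‖w‖ ^ 2) ^ p : ℝ) : ℂ) with hC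
  set E : ℂ → ℂ := fun z' => 2 * z' * conj z' + z' * z' * conj w + (conj z' * conj z') * w with hE
  set a : ℂ := -(2 * (1 - s))⁻¹ with ha
  have hfun : (fun z' => ((rho p z' w : ℝ) : ℂ))
      = fun z' => C * Complex.exp (a * E z') := by
    funext z'
    have h1 : (((z' ^ 2 * conj w + (conj z') ^ 2 * w).re : ℝ) : ℂ)
        = z' ^ 2 * conj w + (conj z') ^ 2 * w := by
      rw [← Complex.conj_eq_iff_re]
      simp only [map_add, map_mul, map_pow, Complex.conj_conj]
      ring
    have hreal : ((2:ℂ) * (‖z'‖:ℂ) ^ 2 + (((z' ^ 2 * conj w + (conj z') ^ 2 * w).re : ℝ):ℂ)) = E z' := by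
      rw [h1, hE]
      have h2 : ((‖z'‖:ℂ))^2 = z' * conj z' := (Complex.mul_conj' z').symm
      rw [h2]; ring
    rw [show rho p z' w = (1 - ‖w‖ ^ 2) ^ p *
      Real.exp (-((2 * ‖z'‖ ^ 2 + (z' ^ 2 * conj w + (conj z') ^ 2 * w).re) /
      (2 * (1 - ‖w‖ ^ 2)))) from rfl]
    push_cast
    congr 1
    rw [hreal, ha, hs, div_eq_inv_mul]
    ring_nf
  rw [hfun]
  have hid : HasFDerivAt (fun z' : ℂ => z') (ContinuousLinearMap.id ℝ ℂ) z := hasFDerivAt_id z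
  have hconj : HasFDerivAt (fun z' : ℂ => (conj z' : ℂ))
      (Complex.conjCLE.toContinuousLinearMap) z := Complex.conjCLE.hasFDerivAt
  set L : ℂ →L[ℝ] ℂ := (2 * conj z + 2 * z * conj w) • ContinuousLinearMap.id ℝ ℂ
      + (2 * z + 2 * conj z * w) • Complex.conjCLE.toContinuousLinearMap with hL
  have hEd : HasFDerivAt E L z := by
    have h := (((hid.const_mul (2:ℂ)).mul hconj).add ((hid.mul hid).mul_const (conj w))).add
      ((hconj.mul hconj).mul_const w)
    refine h.congr_fderiv ?_
    apply ContinuousLinearMap.ext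
    intro v
    simp [hL, Complex.conjCLE, smul_eq_mul]
    ring
  have hfd : HasFDerivAt (fun z' => C * Complex.exp (a * E z'))
      (C • (Complex.exp (a * E z) • (a • L))) z := ((hEd.const_mul a).cexp).const_mul C
  have hfe := hfd.fderiv
  set X : ℂ := Complex.exp (a * E z) with hX
  have hDz : Dz (fun z' => C * Complex.exp (a * E z')) z
      = (1/2) * (C * (X * (a * (L 1)))
        - Complex.I * (C * (X * (a * (L Complex.I))))) := by
    rw [Dz, hfe]; simp [smul_eq_mul]
  have hDzbar : Dzbar (fun z' => C * Complex.exp (a * E z')) z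
      = (1/2) * (C * (X * (a * (L 1)))
        + Complex.I * (C * (X * (a * (L Complex.I))))) := by
    rw [Dzbar, hfe]; simp [smul_eq_mul]
  have hL1 : L 1 = (2 * conj z + 2 * z * conj w) + (2 * z + 2 * conj z * w) := by
    simp [hL, Complex.conjCLE, smul_eq_mul]
  have hILI : Complex.I * L Complex.I
      = -(2 * conj z + 2 * z * conj w) + (2 * z + 2 * conj z * w) := by
    simp [hL, Complex.conjCLE, smul_eq_mul, Complex.conj_I]
    ring_nf
    rw [Complex.I_sq]
    ring
  have hW : w * conj w = s := Complex.mul_conj' w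
  have haC : a * (2 * (1 - s)) = -1 := by
    rw [ha, neg_mul, inv_mul_cancel₀ hcC]
  have hrz : ((rho p z w : ℝ) : ℂ) = C * X := congrFun hfun z
  rw [hDz, hDzbar, hrz]
  linear_combination (w * C * X * a / 2 - C * X * a / 2) * hL1
    + (-(w + 1) * C * X * a / 2) * hILI
    + (C * X * a * 2 * z) * hW
    + (-(z * C * X)) * haC
end

section
/- Let ρ(z,w) = (1−|w|²)^p · exp(−(2|z|² + z²w̄ + z̄²w)/(2(1−|w|²))). Then ρ satisfies (w²·∂/∂w − ∂/∂w̄)ρ = (z²/2 + p·w − z·w·∂/∂z)ρ and 2(w·∂/∂w − w̄·∂/∂w̄)ρ = (z̄·∂/∂z̄ − z·∂/∂z)ρ. -/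
open ComplexConjugate

lemma Dz_ofReal {F : ℂ → ℝ} {L : ℂ →L[ℝ] ℝ} {w : ℂ} (hF : HasFDerivAt F L w) :
    Dz (fun w' => ((F w' : ℝ) : ℂ)) w
      = (1 / 2) * (((L 1 : ℝ) : ℂ) - Complex.I * ((L Complex.I : ℝ) : ℂ)) := by
  have h : HasFDerivAt (fun w' => ((F w' : ℝ) : ℂ)) (Complex.ofRealCLM.comp L) w :=
    Complex.ofRealCLM.hasFDerivAt.comp w hF
  simp [Dz, h.fderiv]

lemma Dzbar_ofReal {F : ℂ → ℝ} {L : ℂ →L[ℝ] ℝ} {w : ℂ} (hF : HasFDerivAt F L w) :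
    Dzbar (fun w' => ((F w' : ℝ) : ℂ)) w
      = (1 / 2) * (((L 1 : ℝ) : ℂ) + Complex.I * ((L Complex.I : ℝ) : ℂ)) := by
  have h : HasFDerivAt (fun w' => ((F w' : ℝ) : ℂ)) (Complex.ofRealCLM.comp L) w :=
    Complex.ofRealCLM.hasFDerivAt.comp w hF
  simp [Dzbar, h.fderiv]

set_option maxHeartbeats 1000000 in
theorem stmt_10 (p : ℝ) (z w : ℂ) (hw : ‖w‖ < 1) :
    (w ^ 2 * Dz (fun w' => ((rho p z w' : ℝ) : ℂ)) w
        - Dzbar (fun w' => ((rho p z w' : ℝ) : ℂ)) w =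
      (z ^ 2 / 2 + (p : ℂ) * w) * ((rho p z w : ℝ) : ℂ)
        - z * w * Dz (fun z' => ((rho p z' w : ℝ) : ℂ)) z) ∧
    (2 * (w * Dz (fun w' => ((rho p z w' : ℝ) : ℂ)) w
        - conj w * Dzbar (fun w' => ((rho p z w' : ℝ) : ℂ)) w) =
      conj z * Dzbar (fun z' => ((rho p z' w : ℝ) : ℂ)) z
        - z * Dz (fun z' => ((rho p z' w : ℝ) : ℂ)) z) := by
  have ht : (0:ℝ) < 1 - (w.re*w.re + w.im*w.im) := by
    have h1 : ‖w‖^2 < 1 := by nlinarith [norm_nonneg w]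
    rw [Complex.sq_norm, Complex.normSq_apply] at h1
    linarith
  -- pointwise value identity
  have hval : ∀ z' w' : ℂ, rho p z' w' = (1 - (w'.re*w'.re + w'.im*w'.im)) ^ p *
      Real.exp (-((2*(z'.re*z'.re+z'.im*z'.im) + 2*(z'.re*z'.re-z'.im*z'.im)*w'.re
        + 2*(2*z'.re*z'.im)*w'.im) * (2 * (1 - (w'.re*w'.re + w'.im*w'.im)))⁻¹)) := by
    intro z' w'
    have h1 : ((z'^2 * conj w' + (conj z')^2 * w').re)
        = 2*(z'.re*z'.re-z'.im*z'.im)*w'.re + 2*(2*z'.re*z'.im)*w'.im := by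
      simp only [pow_two, Complex.add_re, Complex.mul_re, Complex.mul_im,
        Complex.conj_re, Complex.conj_im]
      ring
    unfold rho
    rw [h1, Complex.sq_norm, Complex.sq_norm,
        Complex.normSq_apply, Complex.normSq_apply]
    congr 1
    rw [div_eq_mul_inv]
    congr 1
    ring
  have hfw : (fun w' : ℂ => ((rho p z w' : ℝ) : ℂ))
      = fun w' : ℂ => (((1 - (w'.re*w'.re + w'.im*w'.im)) ^ p *
        Real.exp (-((2*(z.re*z.re+z.im*z.im) + 2*(z.re*z.re-z.im*z.im)*w'.re
          + 2*(2*z.re*z.im)*w'.im) * (2 * (1 - (w'.re*w'.re + w'.im*w'.im)))⁻¹)) : ℝ) : ℂ) :=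
    funext fun w' => by rw [hval]
  have hfz : (fun z' : ℂ => ((rho p z' w : ℝ) : ℂ))
      = fun z' : ℂ => (((1 - (w.re*w.re + w.im*w.im)) ^ p *
        Real.exp (-((2*(z'.re*z'.re+z'.im*z'.im) + 2*(z'.re*z'.re-z'.im*z'.im)*w.re
          + 2*(2*z'.re*z'.im)*w.im) * (2 * (1 - (w.re*w.re + w.im*w.im)))⁻¹)) : ℝ) : ℂ) :=
    funext fun z' => by rw [hval]
  -- derivatives in w
  have hre : HasFDerivAt (fun w' : ℂ => w'.re) (Complex.reCLM : ℂ →L[ℝ] ℝ) w :=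
    Complex.reCLM.hasFDerivAt
  have him : HasFDerivAt (fun w' : ℂ => w'.im) (Complex.imCLM : ℂ →L[ℝ] ℝ) w :=
    Complex.imCLM.hasFDerivAt
  have hsw : HasFDerivAt (fun w' : ℂ => 1 - (w'.re*w'.re + w'.im*w'.im)) _ w :=
    (hasFDerivAt_const (1:ℝ) w).sub ((hre.mul hre).add (him.mul him))
  have hNw : HasFDerivAt (fun w' : ℂ =>
      2*(z.re*z.re+z.im*z.im) + 2*(z.re*z.re-z.im*z.im)*w'.re + 2*(2*z.re*z.im)*w'.im) _ w :=
    ((hasFDerivAt_const (2*(z.re*z.re+z.im*z.im)) w).add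
      (hre.const_mul (2*(z.re*z.re-z.im*z.im)))).add (him.const_mul (2*(2*z.re*z.im)))
  have hinv : HasFDerivAt (fun w' : ℂ => (2 * (1 - (w'.re*w'.re + w'.im*w'.im)))⁻¹) _ w :=
    (hasDerivAt_inv (by positivity)).comp_hasFDerivAt w (hsw.const_mul 2)
  have hpowfn : HasFDerivAt (fun w' : ℂ => (1 - (w'.re*w'.re + w'.im*w'.im)) ^ p) _ w :=
    ((Real.hasDerivAt_rpow_const (x := 1 - (w.re*w.re + w.im*w.im)) (p := p) (Or.inl ht.ne')).comp_hasFDerivAt w hsw :)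
  have hGw : HasFDerivAt (fun w' : ℂ =>
      (1 - (w'.re*w'.re + w'.im*w'.im)) ^ p *
        Real.exp (-((2*(z.re*z.re+z.im*z.im) + 2*(z.re*z.re-z.im*z.im)*w'.re
          + 2*(2*z.re*z.im)*w'.im) * (2 * (1 - (w'.re*w'.re + w'.im*w'.im)))⁻¹))) _ w :=
    hpowfn.mul (((hNw.mul hinv).neg).exp)
  -- derivatives in z
  have hxre : HasFDerivAt (fun z' : ℂ => z'.re) (Complex.reCLM : ℂ →L[ℝ] ℝ) z :=
    Complex.reCLM.hasFDerivAt
  have hxim : HasFDerivAt (fun z' : ℂ => z'.im) (Complex.imCLM : ℂ →L[ℝ] ℝ) z :=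
    Complex.imCLM.hasFDerivAt
  have hNz : HasFDerivAt (fun z' : ℂ =>
      2*(z'.re*z'.re+z'.im*z'.im) + 2*(z'.re*z'.re-z'.im*z'.im)*w.re
        + 2*(2*z'.re*z'.im)*w.im) _ z :=
    ((((hxre.mul hxre).add (hxim.mul hxim)).const_mul 2).add
      ((((hxre.mul hxre).sub (hxim.mul hxim)).const_mul 2).mul_const w.re)).add
      ((((hxre.const_mul 2).mul hxim).const_mul 2).mul_const w.im)
  have hHz : HasFDerivAt (fun z' : ℂ =>
      (1 - (w.re*w.re + w.im*w.im)) ^ p *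
        Real.exp (-((2*(z'.re*z'.re+z'.im*z'.im) + 2*(z'.re*z'.re-z'.im*z'.im)*w.re
          + 2*(2*z'.re*z'.im)*w.im) * (2 * (1 - (w.re*w.re + w.im*w.im)))⁻¹))) _ z :=
    (((hNz.mul_const ((2 * (1 - (w.re*w.re + w.im*w.im)))⁻¹)).neg).exp).const_mul _
  rw [hfw, hfz]
  have hTCne : (((1 - (w.re*w.re + w.im*w.im)) : ℝ) : ℂ) ≠ 0 := by
    exact_mod_cast ht.ne'
  have h2T : 2 * (((1 - (w.re*w.re + w.im*w.im)) : ℝ) : ℂ)^2 ≠ 0 :=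
    mul_ne_zero two_ne_zero (pow_ne_zero 2 hTCne)
  have hDzw : 2 * (((1 - (w.re*w.re + w.im*w.im)) : ℝ) : ℂ)^2 * Dz (fun w' : ℂ => (((1 - (w'.re*w'.re + w'.im*w'.im)) ^ p * Real.exp (-((2*(z.re*z.re+z.im*z.im) + 2*(z.re*z.re-z.im*z.im)*w'.re + 2*(2*z.re*z.im)*w'.im) * (2 * (1 - (w'.re*w'.re + w'.im*w'.im)))⁻¹)) : ℝ) : ℂ)) w
      = (((1 - (w.re*w.re + w.im*w.im)) ^ p : ℝ) : ℂ) * ((Real.exp (-((2*(z.re*z.re+z.im*z.im) + 2*(z.re*z.re-z.im*z.im)*w.re + 2*(2*z.re*z.im)*w.im) * (2 * (1 - (w.re*w.re + w.im*w.im)))⁻¹)) : ℝ) : ℂ) * (-(2*(p:ℂ)*(((1 - (w.re*w.re + w.im*w.im)) : ℝ) : ℂ)*conj w) - (((1 - (w.re*w.re + w.im*w.im)) : ℝ) : ℂ)*(conj z)^2 - (((2*(z.re*z.re+z.im*z.im) + 2*(z.re*z.re-z.im*z.im)*w.re + 2*(2*z.re*z.im)*w.im) : ℝ) : ℂ)*conj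 w) := by
    rw [Dz_ofReal hGw]
    simp only [ContinuousLinearMap.add_apply, ContinuousLinearMap.sub_apply,
      ContinuousLinearMap.smul_apply, ContinuousLinearMap.coe_comp', Function.comp_apply,
      ContinuousLinearMap.zero_apply, Complex.reCLM_apply, Complex.imCLM_apply,
      Complex.one_re, Complex.one_im, Complex.I_re, Complex.I_im, smul_eq_mul,
      ContinuousLinearMap.neg_apply, ContinuousLinearMap.coe_smul', Pi.smul_apply,
      ContinuousLinearMap.coe_sub', Pi.sub_apply, ContinuousLinearMap.coe_add', Pi.add_apply]
    rw [Real.rpow_sub ht, Real.rpow_one]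
    rw [Complex.ext_iff]
    constructor <;>
    · simp only [Complex.add_re, Complex.add_im, Complex.sub_re, Complex.sub_im, Complex.mul_re,
        Complex.mul_im, Complex.ofReal_re, Complex.ofReal_im, Complex.neg_re, Complex.neg_im,
        Complex.I_re, Complex.I_im, Complex.conj_re, Complex.conj_im, pow_two,
        Complex.one_re, Complex.one_im, Complex.re_ofNat, Complex.im_ofNat,
          Pi.neg_apply, Pi.mul_apply, Complex.div_ofNat_re, Complex.div_ofNat_im]
      generalize (1 - (w.re*w.re + w.im*w.im)) = T at ht ⊢
      field_simp
      ring
  have hDzbarw : 2 * (((1 - (w.re*w.re + w.im*w.im)) : ℝ) : ℂ)^2 * Dzbar (fun w' : ℂ => (((1 - (w'.re*w'.re + w'.im*w'.im)) ^ p * Real.exp (-((2*(z.re*z.re+z.im*z.im) + 2*(z.re*z.re-z.im*z.im)*w'.re + 2*(2*z.re*z.im)*w'.im) * (2 * (1 - (w'.re*w'.re + w'.im*w'.im)))⁻¹)) : ℝ) : ℂ)) w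
      = (((1 - (w.re*w.re + w.im*w.im)) ^ p : ℝ) : ℂ) * ((Real.exp (-((2*(z.re*z.re+z.im*z.im) + 2*(z.re*z.re-z.im*z.im)*w.re + 2*(2*z.re*z.im)*w.im) * (2 * (1 - (w.re*w.re + w.im*w.im)))⁻¹)) : ℝ) : ℂ) * (-(2*(p:ℂ)*(((1 - (w.re*w.re + w.im*w.im)) : ℝ) : ℂ)*w) - (((1 - (w.re*w.re + w.im*w.im)) : ℝ) : ℂ)*z^2 - (((2*(z.re*z.re+z.im*z.im) + 2*(z.re*z.re-z.im*z.im)*w.re + 2*(2*z.re*z.im)*w.im) : ℝ) : ℂ)*w) := by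
    rw [Dzbar_ofReal hGw]
    simp only [ContinuousLinearMap.add_apply, ContinuousLinearMap.sub_apply,
      ContinuousLinearMap.smul_apply, ContinuousLinearMap.coe_comp', Function.comp_apply,
      ContinuousLinearMap.zero_apply, Complex.reCLM_apply, Complex.imCLM_apply,
      Complex.one_re, Complex.one_im, Complex.I_re, Complex.I_im, smul_eq_mul,
      ContinuousLinearMap.neg_apply, ContinuousLinearMap.coe_smul', Pi.smul_apply,
      ContinuousLinearMap.coe_sub', Pi.sub_apply, ContinuousLinearMap.coe_add', Pi.add_apply]
    rw [Real.rpow_sub ht, Real.rpow_one]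
    rw [Complex.ext_iff]
    constructor <;>
    · simp only [Complex.add_re, Complex.add_im, Complex.sub_re, Complex.sub_im, Complex.mul_re,
        Complex.mul_im, Complex.ofReal_re, Complex.ofReal_im, Complex.neg_re, Complex.neg_im,
        Complex.I_re, Complex.I_im, Complex.conj_re, Complex.conj_im, pow_two,
        Complex.one_re, Complex.one_im, Complex.re_ofNat, Complex.im_ofNat,
          Pi.neg_apply, Pi.mul_apply, Complex.div_ofNat_re, Complex.div_ofNat_im]
      generalize (1 - (w.re*w.re + w.im*w.im)) = T at ht ⊢
      field_simp
      ring
  have hDzz : (((1 - (w.re*w.re + w.im*w.im)) : ℝ) : ℂ) * Dz (fun z' : ℂ => (((1 - (w.re*w.re + w.im*w.im)) ^ p * Real.exp (-((2*(z'.re*z'.re+z'.im*z'.im) + 2*(z'.re*z'.re-z'.im*z'.im)*w.re + 2*(2*z'.re*z'.im)*w.im) * (2 * (1 - (w.re*w.re + w.im*w.im)))⁻¹)) : ℝ) : ℂ)) z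
      = (((1 - (w.re*w.re + w.im*w.im)) ^ p : ℝ) : ℂ) * ((Real.exp (-((2*(z.re*z.re+z.im*z.im) + 2*(z.re*z.re-z.im*z.im)*w.re + 2*(2*z.re*z.im)*w.im) * (2 * (1 - (w.re*w.re + w.im*w.im)))⁻¹)) : ℝ) : ℂ) * (-(conj z + z * conj w)) := by
    rw [Dz_ofReal hHz]
    simp only [ContinuousLinearMap.add_apply, ContinuousLinearMap.sub_apply,
      ContinuousLinearMap.smul_apply, ContinuousLinearMap.coe_comp', Function.comp_apply,
      ContinuousLinearMap.zero_apply, Complex.reCLM_apply, Complex.imCLM_apply,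
      Complex.one_re, Complex.one_im, Complex.I_re, Complex.I_im, smul_eq_mul,
      ContinuousLinearMap.neg_apply, ContinuousLinearMap.coe_smul', Pi.smul_apply,
      ContinuousLinearMap.coe_sub', Pi.sub_apply, ContinuousLinearMap.coe_add', Pi.add_apply]
    rw [Complex.ext_iff]
    constructor <;>
    · simp only [Complex.add_re, Complex.add_im, Complex.sub_re, Complex.sub_im, Complex.mul_re,
        Complex.mul_im, Complex.ofReal_re, Complex.ofReal_im, Complex.neg_re, Complex.neg_im,
        Complex.I_re, Complex.I_im, Complex.conj_re, Complex.conj_im, pow_two,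
        Complex.one_re, Complex.one_im, Complex.re_ofNat, Complex.im_ofNat,
          Pi.neg_apply, Pi.mul_apply, Complex.div_ofNat_re, Complex.div_ofNat_im]
      generalize (1 - (w.re*w.re + w.im*w.im)) = T at ht ⊢
      field_simp
      ring
  have hDzbarz : (((1 - (w.re*w.re + w.im*w.im)) : ℝ) : ℂ) * Dzbar (fun z' : ℂ => (((1 - (w.re*w.re + w.im*w.im)) ^ p * Real.exp (-((2*(z'.re*z'.re+z'.im*z'.im) + 2*(z'.re*z'.re-z'.im*z'.im)*w.re + 2*(2*z'.re*z'.im)*w.im) * (2 * (1 - (w.re*w.re + w.im*w.im)))⁻¹)) : ℝ) : ℂ)) z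
      = (((1 - (w.re*w.re + w.im*w.im)) ^ p : ℝ) : ℂ) * ((Real.exp (-((2*(z.re*z.re+z.im*z.im) + 2*(z.re*z.re-z.im*z.im)*w.re + 2*(2*z.re*z.im)*w.im) * (2 * (1 - (w.re*w.re + w.im*w.im)))⁻¹)) : ℝ) : ℂ) * (-(z + conj z * w)) := by
    rw [Dzbar_ofReal hHz]
    simp only [ContinuousLinearMap.add_apply, ContinuousLinearMap.sub_apply,
      ContinuousLinearMap.smul_apply, ContinuousLinearMap.coe_comp', Function.comp_apply,
      ContinuousLinearMap.zero_apply, Complex.reCLM_apply, Complex.imCLM_apply,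
      Complex.one_re, Complex.one_im, Complex.I_re, Complex.I_im, smul_eq_mul,
      ContinuousLinearMap.neg_apply, ContinuousLinearMap.coe_smul', Pi.smul_apply,
      ContinuousLinearMap.coe_sub', Pi.sub_apply, ContinuousLinearMap.coe_add', Pi.add_apply]
    rw [Complex.ext_iff]
    constructor <;>
    · simp only [Complex.add_re, Complex.add_im, Complex.sub_re, Complex.sub_im, Complex.mul_re,
        Complex.mul_im, Complex.ofReal_re, Complex.ofReal_im, Complex.neg_re, Complex.neg_im,
        Complex.I_re, Complex.I_im, Complex.conj_re, Complex.conj_im, pow_two,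
        Complex.one_re, Complex.one_im, Complex.re_ofNat, Complex.im_ofNat,
          Pi.neg_apply, Pi.mul_apply, Complex.div_ofNat_re, Complex.div_ofNat_im]
      generalize (1 - (w.re*w.re + w.im*w.im)) = T at ht ⊢
      field_simp
      ring
  have hDzw' : Dz (fun w' : ℂ => (((1 - (w'.re*w'.re + w'.im*w'.im)) ^ p * Real.exp (-((2*(z.re*z.re+z.im*z.im) + 2*(z.re*z.re-z.im*z.im)*w'.re + 2*(2*z.re*z.im)*w'.im) * (2 * (1 - (w'.re*w'.re + w'.im*w'.im)))⁻¹)) : ℝ) : ℂ)) w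
      = (((1 - (w.re*w.re + w.im*w.im)) ^ p : ℝ) : ℂ) * ((Real.exp (-((2*(z.re*z.re+z.im*z.im) + 2*(z.re*z.re-z.im*z.im)*w.re + 2*(2*z.re*z.im)*w.im) * (2 * (1 - (w.re*w.re + w.im*w.im)))⁻¹)) : ℝ) : ℂ) * (-(2*(p:ℂ)*(((1 - (w.re*w.re + w.im*w.im)) : ℝ) : ℂ)*conj w) - (((1 - (w.re*w.re + w.im*w.im)) : ℝ) : ℂ)*(conj z)^2 - (((2*(z.re*z.re+z.im*z.im) + 2*(z.re*z.re-z.im*z.im)*w.re + 2*(2*z.re*z.im)*w.im) : ℝ) : ℂ)*conj w) / (2*(((1 - (w.re*w.re + w.im*w.im)) : ℝ) : ℂ)^2) := by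
    rw [eq_div_iff h2T]
    linear_combination hDzw
  have hDzbarw' : Dzbar (fun w' : ℂ => (((1 - (w'.re*w'.re + w'.im*w'.im)) ^ p * Real.exp (-((2*(z.re*z.re+z.im*z.im) + 2*(z.re*z.re-z.im*z.im)*w'.re + 2*(2*z.re*z.im)*w'.im) * (2 * (1 - (w'.re*w'.re + w'.im*w'.im)))⁻¹)) : ℝ) : ℂ)) w
      = (((1 - (w.re*w.re + w.im*w.im)) ^ p : ℝ) : ℂ) * ((Real.exp (-((2*(z.re*z.re+z.im*z.im) + 2*(z.re*z.re-z.im*z.im)*w.re + 2*(2*z.re*z.im)*w.im) * (2 * (1 - (w.re*w.re + w.im*w.im)))⁻¹)) : ℝ) : ℂ) * (-(2*(p:ℂ)*(((1 - (w.re*w.re + w.im*w.im)) : ℝ) : ℂ)*w) - (((1 - (w.re*w.re + w.im*w.im)) : ℝ) : ℂ)*z^2 - (((2*(z.re*z.re+z.im*z.im) + 2*(z.re*z.re-z.im*z.im)*w.re + 2*(2*z.re*z.im)*w.im) : ℝ) : ℂ)*w) / (2*(((1 - (w.re*w.re + w.im*w.im)) : ℝ) : ℂ)^2) := by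
    rw [eq_div_iff h2T]
    linear_combination hDzbarw
  have hDzz' : Dz (fun z' : ℂ => (((1 - (w.re*w.re + w.im*w.im)) ^ p * Real.exp (-((2*(z'.re*z'.re+z'.im*z'.im) + 2*(z'.re*z'.re-z'.im*z'.im)*w.re + 2*(2*z'.re*z'.im)*w.im) * (2 * (1 - (w.re*w.re + w.im*w.im)))⁻¹)) : ℝ) : ℂ)) z = (((1 - (w.re*w.re + w.im*w.im)) ^ p : ℝ) : ℂ) * ((Real.exp (-((2*(z.re*z.re+z.im*z.im) + 2*(z.re*z.re-z.im*z.im)*w.re + 2*(2*z.re*z.im)*w.im) * (2 * (1 - (w.re*w.re + w.im*w.im)))⁻¹)) : ℝ) : ℂ) * (-(conj z + z * conj w)) / (((1 - (w.re*w.re + w.im*w.im)) : ℝ) : ℂ) := by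
    rw [eq_div_iff hTCne]
    linear_combination hDzz
  have hDzbarz' : Dzbar (fun z' : ℂ => (((1 - (w.re*w.re + w.im*w.im)) ^ p * Real.exp (-((2*(z'.re*z'.re+z'.im*z'.im) + 2*(z'.re*z'.re-z'.im*z'.im)*w.re + 2*(2*z'.re*z'.im)*w.im) * (2 * (1 - (w.re*w.re + w.im*w.im)))⁻¹)) : ℝ) : ℂ)) z = (((1 - (w.re*w.re + w.im*w.im)) ^ p : ℝ) : ℂ) * ((Real.exp (-((2*(z.re*z.re+z.im*z.im) + 2*(z.re*z.re-z.im*z.im)*w.re + 2*(2*z.re*z.im)*w.im) * (2 * (1 - (w.re*w.re + w.im*w.im)))⁻¹)) : ℝ) : ℂ) * (-(z + conj z * w)) / (((1 - (w.re*w.re + w.im*w.im)) : ℝ) : ℂ) := by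
    rw [eq_div_iff hTCne]
    linear_combination hDzbarz
  have hTC : (((1 - (w.re*w.re + w.im*w.im)) : ℝ) : ℂ) = 1 - w * conj w := by
    rw [Complex.ext_iff]
    constructor <;> simp [Complex.mul_re, Complex.mul_im] <;> ring
  have hNC : (((2*(z.re*z.re+z.im*z.im) + 2*(z.re*z.re-z.im*z.im)*w.re + 2*(2*z.re*z.im)*w.im) : ℝ) : ℂ) = 2*(z*conj z) + z^2*conj w + (conj z)^2*w := by
    rw [Complex.ext_iff]
    constructor <;>
    · simp [Complex.add_re, Complex.add_im, Complex.mul_re, Complex.mul_im, pow_two]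
      ring
  have hTne : (1 : ℂ) - w * conj w ≠ 0 := by
    rw [← hTC]
    exact_mod_cast ht.ne'
  rw [hDzw', hDzbarw', hDzz', hDzbarz', hval z w, hTC, hNC]
  push_cast
  constructor
  · field_simp
    ring
  · field_simp
    ring
end

section
/- For a ∈ ℂ, b ∈ ℂ with |a|²−|b|²=1, α ∈ ℂ, z ∈ ℂ and |w| < 1, set κ = ā + w·b̄, γ = z + α − ᾱ·w, z₁ = γ/κ, w₁ = (aw+b)/κ. Then |w₁| < 1 and the map (z,w) ↦ (z₁,w₁) defines a group action of the Jacobi group G^J = SU(1,1) ⋉ ℂ (with composition law (g₁,α₁)∘(g₂,α₂) = (g₁g₂, g₂⁻¹·α₁ + α₂), where g⁻¹·α = ā·α − b·ᾱ) on ℂ × 𝔻. -/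
open ComplexConjugate

/-- An element of the Jacobi group `SU(1,1) ⋉ ℂ` is encoded as `(a, b, α)` with
`|a|² − |b|² = 1`, representing `(((a,b),(b̄,ā)), α)`. Multiplication realizes
`(g₁,α₁)∘(g₂,α₂) = (g₁g₂, g₂⁻¹·α₁ + α₂)` with `g⁻¹·α = ā·α − b·ᾱ`. -/
def Jmul (h₁ h₂ : ℂ × ℂ × ℂ) : ℂ × ℂ × ℂ :=
  (h₁.1 * h₂.1 + h₁.2.1 * conj h₂.2.1,
   h₁.1 * h₂.2.1 + h₁.2.1 * conj h₂.1,
   conj h₂.1 * h₁.2.2 - h₂.2.1 * conj h₁.2.2 + h₂.2.2)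

/-- The action `(z,w) ↦ (γ/κ, (aw+b)/κ)` with `κ = ā + wb̄`, `γ = z + α − ᾱw`. -/
noncomputable def Jact (h : ℂ × ℂ × ℂ) (x : ℂ × ℂ) : ℂ × ℂ :=
  ((x.1 + h.2.2 - conj h.2.2 * x.2) / (conj h.1 + x.2 * conj h.2.1),
   (h.1 * x.2 + h.2.1) / (conj h.1 + x.2 * conj h.2.1))

lemma norm_sq_eq' (z : ℂ) : ‖z‖ ^ 2 = Complex.normSq z := by
  rw [Complex.sq_norm]

lemma key_sq (a b w : ℂ) :
    Complex.normSq (conj a + w * conj b) - Complex.normSq (a * w + b)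
      = (1 - Complex.normSq w) * (Complex.normSq a - Complex.normSq b) := by
  simp only [Complex.normSq_apply, Complex.add_re, Complex.add_im, Complex.mul_re,
    Complex.mul_im, Complex.conj_re, Complex.conj_im]
  ring

lemma kappa_ne (a b w : ℂ) (h : ‖a‖ ^ 2 - ‖b‖ ^ 2 = 1) (hw : ‖w‖ < 1) :
    conj a + w * conj b ≠ 0 := by
  intro h0
  have h1 : Complex.normSq (conj a + w * conj b) = 0 := by rw [h0]; simp
  have h2 := key_sq a b w
  rw [h1] at h2
  rw [norm_sq_eq', norm_sq_eq'] at h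
  have hw2 : Complex.normSq w < 1 := by
    rw [← norm_sq_eq']; nlinarith [norm_nonneg w]
  nlinarith [Complex.normSq_nonneg (a * w + b)]

lemma part1 (a b w : ℂ) (h : ‖a‖ ^ 2 - ‖b‖ ^ 2 = 1) (hw : ‖w‖ < 1) :
    ‖(a * w + b) / (conj a + w * conj b)‖ < 1 := by
  have hk := kappa_ne a b w h hw
  rw [norm_div, div_lt_one (norm_pos_iff.mpr hk)]
  have h2 := key_sq a b w
  rw [norm_sq_eq', norm_sq_eq'] at h
  have hw2 : Complex.normSq w < 1 := by
    rw [← norm_sq_eq']; nlinarith [norm_nonneg w]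
  have hsq : ‖a * w + b‖ ^ 2 < ‖conj a + w * conj b‖ ^ 2 := by
    rw [norm_sq_eq', norm_sq_eq']; nlinarith
  nlinarith [norm_nonneg (a * w + b), norm_nonneg (conj a + w * conj b)]

lemma su_mul (a₁ b₁ a₂ b₂ : ℂ) (h₁ : ‖a₁‖ ^ 2 - ‖b₁‖ ^ 2 = 1) (h₂ : ‖a₂‖ ^ 2 - ‖b₂‖ ^ 2 = 1) :
    ‖a₁ * a₂ + b₁ * conj b₂‖ ^ 2 - ‖a₁ * b₂ + b₁ * conj a₂‖ ^ 2 = 1 := by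
  rw [norm_sq_eq', norm_sq_eq'] at *
  simp only [Complex.normSq_apply, Complex.add_re, Complex.add_im, Complex.mul_re,
    Complex.mul_im, Complex.conj_re, Complex.conj_im] at *
  nlinarith [h₁, h₂]

/-- The map `(z,w) ↦ (z₁,w₁)` preserves `ℂ × 𝔻` and defines a group action of the
Jacobi group on `ℂ × 𝔻`. -/
theorem stmt_14 :
    (∀ (a b α z w : ℂ), ‖a‖ ^ 2 - ‖b‖ ^ 2 = 1 → ‖w‖ < 1 →
      ‖(Jact (a, b, α) (z, w)).2‖ < 1) ∧
    (∀ x : ℂ × ℂ, Jact (1, 0, 0) x = x) ∧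
    (∀ h₁ h₂ : ℂ × ℂ × ℂ, ‖h₁.1‖ ^ 2 - ‖h₁.2.1‖ ^ 2 = 1 → ‖h₂.1‖ ^ 2 - ‖h₂.2.1‖ ^ 2 = 1 →
      ∀ x : ℂ × ℂ, ‖x.2‖ < 1 → Jact (Jmul h₁ h₂) x = Jact h₁ (Jact h₂ x)) := by
  refine ⟨?_, ?_, ?_⟩
  · intro a b α z w h hw
    simpa [Jact] using part1 a b w h hw
  · intro x
    simp [Jact]
  · rintro ⟨a₁, b₁, α₁⟩ ⟨a₂, b₂, α₂⟩ h₁ h₂ ⟨z, w⟩ hw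
    simp only at h₁ h₂ hw
    have hκ₂ : conj a₂ + w * conj b₂ ≠ 0 := kappa_ne a₂ b₂ w h₂ hw
    have hw₂ : ‖(a₂ * w + b₂) / (conj a₂ + w * conj b₂)‖ < 1 := part1 a₂ b₂ w h₂ hw
    have hκ₁ : conj a₁ + ((a₂ * w + b₂) / (conj a₂ + w * conj b₂)) * conj b₁ ≠ 0 :=
      kappa_ne a₁ b₁ _ h₁ hw₂
    have hκm : conj (a₁ * a₂ + b₁ * conj b₂) + w * conj (a₁ * b₂ + b₁ * conj a₂) ≠ 0 :=
      kappa_ne _ _ w (su_mul a₁ b₁ a₂ b₂ h₁ h₂) hw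
    have hκ₁' : conj a₁ * (conj a₂ + w * conj b₂) + (a₂ * w + b₂) * conj b₁ ≠ 0 := by
      intro h0
      apply hκ₁
      field_simp
      linear_combination h0
    have hD : conj a₂ * conj a₁ + b₂ * conj b₁ + a₂ * w * conj b₁
        + conj b₂ * w * conj a₁ ≠ 0 := by
      intro h0; exact hκ₁' (by linear_combination h0)
    ext
    · simp only [Jact, Jmul, map_add, map_mul, map_sub, Complex.conj_conj]
      rw [div_eq_div_iff (by intro h0; exact hD (by linear_combination h0)) hκ₁]
      have e1 : conj b₂ * w + conj a₂ ≠ 0 := by rw [add_comm, mul_comm]; exact hκ₂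
      have e2 : conj a₂ + conj b₂ * w ≠ 0 := by rw [mul_comm]; exact hκ₂
      field_simp
      ring
    · simp only [Jact, Jmul, map_add, map_mul, map_sub, Complex.conj_conj]
      rw [div_eq_div_iff (by intro h0; exact hD (by linear_combination h0)) hκ₁]
      have e1 : conj b₂ * w + conj a₂ ≠ 0 := by rw [add_comm, mul_comm]; exact hκ₂
      have e2 : conj a₂ + conj b₂ * w ≠ 0 := by rw [mul_comm]; exact hκ₂
      field_simp
      ring
end
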